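/- Under the positivity, randomization and modularity assumptions, for a binary outcome Y the causal risk ratio in the experimental regime is identified as P_E(Y=1 | T=1) / P_E(Y=1 | T=0) = ( Σ_x P_O(Y=1 | T=1, X=x) P_O(X=x) ) / ( Σ_x P_O(Y=1 | T=0, X=x) P_O(X=x) ), provided the denominator Σ_x P_O(Y=1 | T=0, X=x) P_O(X=x) is positive. -/
import Mathlib


/-!
Discrete target-trial setup with binary outcome: `P_O` and `P_E` are probability mass
functions on `Bool × Bool × 𝒳` (binary outcome `Y`, binary treatment `T`, covariate `X`).
STATEMENT 4: Under positivity, randomization and modularity, the causal risk ratio is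
identified:
`P_E(Y=1 | T=1) / P_E(Y=1 | T=0)
  = (∑_x P_O(Y=1 | T=1, X=x) P_O(X=x)) / (∑_x P_O(Y=1 | T=0, X=x) P_O(X=x))`,
provided the denominator is positive.
-/

open scoped BigOperators

noncomputable section

variable {𝒳 : Type*} [Countable 𝒳]

/-- Marginal mass of `X = x`. -/
def margX (P : Bool × Bool × 𝒳 → ℝ) (x : 𝒳) : ℝ :=
  ∑' y : Bool, ∑' t : Bool, P (y, t, x)

/-- Marginal mass of `T = t`. -/
def margT (P : Bool × Bool × 𝒳 → ℝ) (t : Bool) : ℝ :=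
  ∑' y : Bool, ∑' x : 𝒳, P (y, t, x)

/-- Joint mass of `T = t, X = x`. -/
def margTX (P : Bool × Bool × 𝒳 → ℝ) (t : Bool) (x : 𝒳) : ℝ :=
  ∑' y : Bool, P (y, t, x)

/-- Joint mass of `Y = y, T = t`. -/
def margYT (P : Bool × Bool × 𝒳 → ℝ) (y t : Bool) : ℝ :=
  ∑' x : 𝒳, P (y, t, x)

theorem causal_risk_ratio_identification
    (P_O P_E : Bool × Bool × 𝒳 → ℝ)
    (hO_nonneg : ∀ z, 0 ≤ P_O z) (hO_sum : HasSum P_O 1)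
    (hE_nonneg : ∀ z, 0 ≤ P_E z) (hE_sum : HasSum P_E 1)
    -- Positivity
    (hposE : 0 < margT P_E true ∧ margT P_E true < 1)
    (hposO : ∀ x : 𝒳, 0 < margX P_O x →
      0 < margTX P_O true x / margX P_O x ∧ margTX P_O true x / margX P_O x < 1)
    -- Randomization: `T ⫫ X` under `P_E`
    (hrand : ∀ (t : Bool) (x : 𝒳), margTX P_E t x = margT P_E t * margX P_E x)
    -- Modularity (cross-multiplied form): `P_E(Y=y | T=t, X=x) = P_O(Y=y | T=t, X=x)`
    (hmodY : ∀ (y t : Bool) (x : 𝒳),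
      P_E (y, t, x) * margTX P_O t x = P_O (y, t, x) * margTX P_E t x)
    -- Modularity: `P_E(X=x) = P_O(X=x)`
    (hmodX : ∀ x : 𝒳, margX P_E x = margX P_O x)
    -- the identified denominator is positive
    (hdenom : 0 < ∑' x : 𝒳, (P_O (true, false, x) / margTX P_O false x) * margX P_O x) :
    (margYT P_E true true / margT P_E true) / (margYT P_E true false / margT P_E false)
      = (∑' x : 𝒳, (P_O (true, true, x) / margTX P_O true x) * margX P_O x)
        / (∑' x : 𝒳, (P_O (true, false, x) / margTX P_O false x) * margX P_O x) := by
  obtain ⟨hT1pos, hT1lt⟩ := hposE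
  -- split of margX into margTX
  have hsplit : ∀ (P : Bool × Bool × 𝒳 → ℝ) (x : 𝒳),
      margX P x = margTX P false x + margTX P true x := by
    intro P x
    simp only [margX, margTX, tsum_bool]
    ring
  have hXnnO : ∀ x, 0 ≤ margX P_O x :=
    fun x => tsum_nonneg fun y => tsum_nonneg fun t => hO_nonneg _
  have hsumE := hE_sum.summable
  have hinner : ∀ y : Bool, Summable (fun w : Bool × 𝒳 => P_E (y, w)) := by
    intro y
    exact hsumE.comp_injective (by intro a b h; simpa using h)
  -- total mass splits over T
  have htotal : margT P_E false + margT P_E true = 1 := by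
    have h1 : ∑' z : Bool × Bool × 𝒳, P_E z = 1 := hE_sum.tsum_eq
    rw [Summable.tsum_prod' hsumE (fun y => hinner y)] at h1
    have h3 : ∀ y : Bool, ∑' w : Bool × 𝒳, P_E (y, w)
        = ∑' t : Bool, ∑' x : 𝒳, P_E (y, t, x) := fun y => Summable.tsum_prod' (hinner y) (fun t => (hinner y).comp_injective (i := fun x : 𝒳 => (t, x)) (by intro a b h; simpa using h))
    rw [tsum_bool, h3, h3, tsum_bool, tsum_bool] at h1
    simp only [margT, tsum_bool]
    linarith
  have hT0pos : 0 < margT P_E false := by linarith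
  -- pointwise identity
  have key : ∀ (t : Bool) (x : 𝒳), P_E (true, t, x)
      = margT P_E t * ((P_O (true, t, x) / margTX P_O t x) * margX P_O x) := by
    intro t x
    rcases eq_or_lt_of_le (hXnnO x) with h0 | hpos
    · -- margX P_O x = 0
      have hEx : margX P_E x = 0 := by rw [hmodX]; exact h0.symm
      have hTXE : margTX P_E t x = 0 := by rw [hrand, hEx, mul_zero]
      have hle : P_E (true, t, x) ≤ margTX P_E t x := by
        simp only [margTX, tsum_bool]
        linarith [hE_nonneg (false, t, x)]
      have : P_E (true, t, x) = 0 :=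
        le_antisymm (hTXE ▸ hle) (hE_nonneg _)
      rw [this, ← h0, mul_zero, mul_zero]
    · -- margX P_O x > 0
      obtain ⟨hr0, hr1⟩ := hposO x hpos
      have hTx1 : 0 < margTX P_O true x := by
        have := (div_pos_iff.mp hr0)
        rcases this with ⟨h, _⟩ | ⟨_, h⟩
        · exact h
        · linarith
      have hTxlt : margTX P_O true x < margX P_O x := by
        have := (div_lt_one hpos).mp hr1
        exact this
      have hTx0 : 0 < margTX P_O false x := by
        have := hsplit P_O x
        linarith
      have hTxt : 0 < margTX P_O t x := by cases t <;> assumption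
      have hm := hmodY true t x
      rw [hrand, hmodX] at hm
      field_simp
      linarith [hm]
  -- tsum identity
  have hmargYT : ∀ t : Bool, margYT P_E true t
      = margT P_E t * ∑' x : 𝒳, (P_O (true, t, x) / margTX P_O t x) * margX P_O x := by
    intro t
    rw [margYT, tsum_congr (fun x => key t x), tsum_mul_left]
  rw [hmargYT, hmargYT]
  have hc : ∀ (c a : ℝ), c ≠ 0 → c * a / c = a := fun c a hc => by field_simp
  rw [hc _ _ (ne_of_gt hT1pos), hc _ _ (ne_of_gt hT0pos)]

end
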